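/- Class BDI block form: let H be a 2n×2n complex matrix that is Hermitian, real (conj(H) = H), satisfies H² = 1, and anticommutes with Σ := fromBlocks(1ₙ, 0, 0, −1ₙ), i.e. Σ·H·Σ = −H. Then there exists an n×n real orthogonal matrix q (conj(q) = q and q·qᵀ = 1ₙ) such that H = fromBlocks(0, q, qᵀ, 0). -/
import Mathlib


open Matrix

/-- Entrywise complex conjugation of a matrix. -/
def mconj {m n : Type*} (M : Matrix m n ℂ) : Matrix m n ℂ :=
  M.map (starRingEnd ℂ)

lemma toBlocks_one₁₁ {n : ℕ} :
    (1 : Matrix (Fin n ⊕ Fin n) (Fin n ⊕ Fin n) ℂ).toBlocks₁₁ = 1 := by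
  rw [← fromBlocks_one, toBlocks_fromBlocks₁₁]

lemma toBlocks_one₂₂ {n : ℕ} :
    (1 : Matrix (Fin n ⊕ Fin n) (Fin n ⊕ Fin n) ℂ).toBlocks₂₂ = 1 := by
  rw [← fromBlocks_one, toBlocks_fromBlocks₂₂]

/-- Class BDI block form: a flattened Hamiltonian (`Hᴴ = H`, `conj(H) = H`, `H² = 1`)
anticommuting with `Σ = fromBlocks 1 0 0 (−1)` has the form `H = fromBlocks 0 q qᵀ 0`
with `q` real orthogonal. -/
theorem BDI_block_form {n : ℕ}
    (H : Matrix (Fin n ⊕ Fin n) (Fin n ⊕ Fin n) ℂ)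
    (hH : Hᴴ = H)
    (hreal : mconj H = H)
    (hflat : H * H = 1)
    (hchi : (fromBlocks (1 : Matrix (Fin n) (Fin n) ℂ) 0 0 (-1)) * H *
        (fromBlocks (1 : Matrix (Fin n) (Fin n) ℂ) 0 0 (-1)) = -H) :
    ∃ q : Matrix (Fin n) (Fin n) ℂ,
      mconj q = q ∧ q * qᵀ = 1 ∧ qᵀ * q = 1 ∧ H = fromBlocks 0 q qᵀ 0 := by
  set A := H.toBlocks₁₁ with hA
  set B := H.toBlocks₁₂ with hB
  set C := H.toBlocks₂₁ with hC
  set D := H.toBlocks₂₂ with hD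
  have hHb : H = fromBlocks A B C D := (fromBlocks_toBlocks H).symm
  rw [hHb] at hchi
  rw [fromBlocks_multiply, fromBlocks_multiply, fromBlocks_neg] at hchi
  have hA0 : A = 0 := by
    have h := congrArg toBlocks₁₁ hchi
    simp [toBlocks_fromBlocks₁₁] at h
    ext i j
    have := congrFun (congrFun h i) j
    simp [Matrix.neg_apply] at this
    have : A i j = - A i j := this
    have h2 : A i j + A i j = 0 := by linear_combination this
    simpa using by linear_combination h2 / 2
  have hD0 : D = 0 := by
    have h := congrArg toBlocks₂₂ hchi
    simp [toBlocks_fromBlocks₂₂] at h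
    ext i j
    have := congrFun (congrFun h i) j
    simp [Matrix.neg_apply] at this
    have : D i j = - D i j := by linear_combination this
    have h2 : D i j + D i j = 0 := by linear_combination this
    simpa using by linear_combination h2 / 2
  rw [hA0, hD0] at hHb
  -- reality of B
  have hBreal : mconj B = B := by
    have h := congrArg toBlocks₁₂ (hHb ▸ hreal)
    rw [mconj, fromBlocks_map] at h
    simpa [toBlocks_fromBlocks₁₂, mconj] using h
  -- C = Bᵀ
  have hCB : C = Bᵀ := by
    have h := congrArg toBlocks₂₁ (hHb ▸ hH)
    rw [fromBlocks_conjTranspose] at h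
    have h' : Bᴴ = C := by simpa [toBlocks_fromBlocks₂₁] using h
    have : Bᴴ = Bᵀ := by
      rw [show Bᴴ = (mconj B)ᵀ from rfl, hBreal]
    rw [← h', this]
  rw [hCB] at hHb
  refine ⟨B, hBreal, ?_, ?_, hHb⟩
  · have h := congrArg toBlocks₁₁ (hHb ▸ hflat)
    rw [fromBlocks_multiply] at h
    simpa [toBlocks_fromBlocks₁₁, toBlocks_one₁₁] using h
  · have h := congrArg toBlocks₂₂ (hHb ▸ hflat)
    rw [fromBlocks_multiply] at h
    simpa [toBlocks_fromBlocks₂₂, toBlocks_one₂₂] using h
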